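/- If 𝒢 is a crossed group operad (i.e., the structure morphism π: 𝒢 → 𝒮 is not trivial on all levels), then π: G_n → S_n is surjective for every n. -/

import Mathlib

/-- Distributing a sigma type over a sum index. -/
def sumSigmaDistrib {α β : Type*} (P : α ⊕ β → Type*) :
    (Σ s, P s) ≃ (Σ a, P (Sum.inl a)) ⊕ (Σ b, P (Sum.inr b)) where
  toFun p :=
    match p with
    | ⟨Sum.inl a, x⟩ => Sum.inl ⟨a, x⟩
    | ⟨Sum.inr b, x⟩ => Sum.inr ⟨b, x⟩
  invFun q :=
    match q with
    | Sum.inl ⟨a, x⟩ => ⟨Sum.inl a, x⟩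
    | Sum.inr ⟨b, x⟩ => ⟨Sum.inr b, x⟩
  left_inv p := by rcases p with ⟨a | b, x⟩ <;> rfl
  right_inv q := by rcases q with ⟨a, x⟩ | ⟨b, x⟩ <;> rfl

/-- A sigma type over `Fin 1` is just its unique fiber. -/
def sigmaFin1 (Q : Fin 1 → Type*) : (Σ b : Fin 1, Q b) ≃ Q 0 where
  toFun p := Fin.cases (motive := fun b => Q b → Q 0) id (fun i => i.elim0) p.1 p.2
  invFun x := ⟨0, x⟩
  left_inv := by rintro ⟨b, x⟩; fin_cases b; rfl
  right_inv x := rfl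

/-- The order-preserving equivalence `(Σ i : Fin k, Fin (m i)) ≃ Fin (∑ i, m i)`. -/
def finSigmaEquiv : ∀ (k : ℕ) (m : Fin k → ℕ), (Σ i : Fin k, Fin (m i)) ≃ Fin (∑ i, m i)
  | 0, m => (Equiv.equivOfIsEmpty _ (Fin 0)).trans (finCongr (by simp))
  | k+1, m =>
      ((Equiv.sigmaCongrLeft (β := fun i => Fin (m i)) (finSumFinEquiv (m := k) (n := 1))).symm.trans
        ((sumSigmaDistrib _).trans
          ((Equiv.sumCongr (finSigmaEquiv k fun a => m (finSumFinEquiv (Sum.inl a)))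
              (sigmaFin1 _)).trans
            (finSumFinEquiv.trans (finCongr (by
              rw [Fin.sum_univ_castSucc]
              congr 1))))))

/-- Block composition of permutations: `k` blocks of sizes `m 0, …, m (k-1)` are permuted
according to `σ` and the `i`-th block is permuted internally by `τ i`.  This is the operadic
composition of the symmetric groups operad `𝒮`. -/
def blockComp {k : ℕ} {m : Fin k → ℕ} (σ : Equiv.Perm (Fin k))
    (τ : (i : Fin k) → Equiv.Perm (Fin (m i))) : Equiv.Perm (Fin (∑ i, m i)) :=
  let e₂ : (Σ i : Fin k, Fin (m i)) ≃ Σ j : Fin k, Fin (m (σ.symm j)) :=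
    Equiv.sigmaCongr σ fun i => (τ i).trans (finCongr (congrArg m (σ.symm_apply_apply i).symm))
  ((finSigmaEquiv k m).symm.trans e₂).trans
    ((finSigmaEquiv k fun j => m (σ.symm j)).trans (finCongr (Equiv.sum_comp σ.symm m)))


lemma sigmaCongrLeft_symm_last (k : ℕ) (m : Fin (k+1) → ℕ) (y : Fin (m (Fin.last k))) :
    (Equiv.sigmaCongrLeft (β := fun i : Fin (k+1) => Fin (m i))
        (finSumFinEquiv (m := k) (n := 1))).symm ⟨Fin.last k, y⟩
      = ⟨Sum.inr 0, finCongr (congrArg m (by ext; simp)) y⟩ := by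
  apply (Equiv.sigmaCongrLeft (β := fun i : Fin (k+1) => Fin (m i))
      (finSumFinEquiv (m := k) (n := 1))).injective
  rw [Equiv.apply_symm_apply]
  simp only [Equiv.sigmaCongrLeft_apply]
  apply Sigma.ext
  · ext; simp
  · rw [Fin.heq_ext_iff (congrArg m (by ext; simp))]; rfl

lemma sigmaCongrLeft_symm_cast (k : ℕ) (m : Fin (k+1) → ℕ) (i' : Fin k)
    (y : Fin (m i'.castSucc)) :
    (Equiv.sigmaCongrLeft (β := fun i : Fin (k+1) => Fin (m i))
        (finSumFinEquiv (m := k) (n := 1))).symm ⟨i'.castSucc, y⟩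
      = ⟨Sum.inl i', finCongr (congrArg m (by ext; simp)) y⟩ := by
  apply (Equiv.sigmaCongrLeft (β := fun i : Fin (k+1) => Fin (m i))
      (finSumFinEquiv (m := k) (n := 1))).injective
  rw [Equiv.apply_symm_apply]
  simp only [Equiv.sigmaCongrLeft_apply]
  apply Sigma.ext
  · ext; simp
  · rw [Fin.heq_ext_iff (congrArg m (by ext; simp))]; rfl

theorem finSigmaEquiv_val : ∀ (k : ℕ) (m : Fin k → ℕ) (i : Fin k) (y : Fin (m i)),
    ((finSigmaEquiv k m ⟨i, y⟩ : Fin _) : ℕ) = ∑ j : Fin i.1, m (Fin.castLE i.isLt.le j) + y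
  | 0, m, i, y => i.elim0
  | k+1, m, i, y => by
    induction i using Fin.lastCases with
    | last =>
      simp only [finSigmaEquiv, Equiv.trans_apply, sigmaCongrLeft_symm_last]
      simp only [sumSigmaDistrib, Equiv.coe_fn_mk, Equiv.sumCongr_apply, Sum.map_inr,
        sigmaFin1, finSumFinEquiv_apply_right, finCongr_apply, Fin.coe_cast, Fin.coe_natAdd]
      simp only [Fin.cases_zero, id, Fin.coe_cast, Fin.val_last]
      refine congrArg (· + (y:ℕ)) (Finset.sum_congr rfl fun j _ => congrArg m (by ext; simp))
    | cast i' =>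
      have IH := finSigmaEquiv_val k (fun a => m (finSumFinEquiv (Sum.inl a))) i'
      simp only [finSigmaEquiv, Equiv.trans_apply, sigmaCongrLeft_symm_cast]
      simp only [sumSigmaDistrib, Equiv.coe_fn_mk, Equiv.sumCongr_apply, Sum.map_inl,
        finSumFinEquiv_apply_left, finCongr_apply, Fin.coe_cast, Fin.coe_castAdd]
      simp only [finSumFinEquiv_apply_left] at IH
      erw [IH]
      simp only [Fin.coe_cast, Fin.coe_castSucc]
      refine congrArg (· + (y:ℕ)) (Finset.sum_congr rfl fun j _ => congrArg m (by ext; simp))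

lemma blockComp_apply {k : ℕ} {m : Fin k → ℕ} (σ : Equiv.Perm (Fin k))
    (τ : (i : Fin k) → Equiv.Perm (Fin (m i))) (i : Fin k) (y : Fin (m i)) :
    blockComp σ τ (finSigmaEquiv k m ⟨i, y⟩)
      = finCongr (Equiv.sum_comp σ.symm m)
          (finSigmaEquiv k (fun j => m (σ.symm j))
            ⟨σ i, finCongr (congrArg m (σ.symm_apply_apply i).symm) (τ i y)⟩) := by
  simp only [blockComp, Equiv.trans_apply, Equiv.symm_apply_apply]
  rfl

lemma blockComp_val {k : ℕ} {m : Fin k → ℕ} (σ : Equiv.Perm (Fin k))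
    (τ : (i : Fin k) → Equiv.Perm (Fin (m i))) (i : Fin k) (y : Fin (m i)) :
    ((blockComp σ τ (finSigmaEquiv k m ⟨i, y⟩) : Fin _) : ℕ)
      = ∑ j : Fin ((σ i : Fin k) : ℕ), m (σ.symm (Fin.castLE (σ i).isLt.le j)) + (τ i y : ℕ) := by
  rw [blockComp_apply]
  simp only [finCongr_apply, Fin.coe_cast]
  rw [finSigmaEquiv_val]
  simp only [Fin.coe_cast]

/-- Conjugating a permutation along an equality of levels. -/
def permCast {a b : ℕ} (h : a = b) (e : Equiv.Perm (Fin a)) : Equiv.Perm (Fin b) :=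
  ((finCongr h.symm).trans e).trans (finCongr h)

lemma permCast_val {a b : ℕ} (h : a = b) (e : Equiv.Perm (Fin a)) (x : Fin b) :
    ((permCast h e x : Fin b) : ℕ) = ((e (finCongr h.symm x) : Fin a) : ℕ) := rfl

lemma permCast_refl {a : ℕ} (e : Equiv.Perm (Fin a)) : permCast rfl e = e := by
  ext x; rfl
/-- A group operad: an operad `𝒢 = {G n}` of groups together with a morphism `π` to the
symmetric groups operad, such that the identity of `G 1` is the operadic unit and the
operadic composition `γ` is a crossed homomorphism. -/
structure GroupOperad (G : ℕ → Type) [∀ n, Group (G n)] where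
  π : ∀ n, G n →* Equiv.Perm (Fin n)
  γ : ∀ {k : ℕ} {m : Fin k → ℕ}, G k → ((i : Fin k) → G (m i)) → G (∑ i, m i)
  one_γ : ∀ {n : ℕ} (b : G n), γ (1 : G 1) (fun _ : Fin 1 => b) = cast (congrArg G (by simp)) b
  γ_one : ∀ {k : ℕ} (a : G k), γ a (fun _ : Fin k => (1 : G 1)) = cast (congrArg G (by simp)) a
  crossed : ∀ {k : ℕ} {m : Fin k → ℕ} (a a' : G k) (b b' : (i : Fin k) → G (m i)),
      γ (a * a') (fun i => b i * b' i) =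
        γ a b *
          cast (congrArg G (Equiv.sum_comp (π k a).symm m))
            (γ a' fun i => b' ((π k a).symm i))
  π_γ : ∀ {k : ℕ} {m : Fin k → ℕ} (a : G k) (b : (i : Fin k) → G (m i)),
      π (∑ i, m i) (γ a b) = blockComp (π k a) fun i => π (m i) (b i)


section Lemmas
variable {G : ℕ → Type} [∀ n, Group (G n)] (P : GroupOperad G)

lemma mem_blockComp {k : ℕ} {m : Fin k → ℕ} (σ : Equiv.Perm (Fin k))
    (τ : (i : Fin k) → Equiv.Perm (Fin (m i))) (hσ : σ ∈ (P.π k).range)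
    (hτ : ∀ i, τ i ∈ (P.π (m i)).range) :
    blockComp σ τ ∈ (P.π (∑ i, m i)).range := by
  obtain ⟨a, rfl⟩ := hσ
  choose b hb using hτ
  exact ⟨P.γ a b, by rw [P.π_γ]; exact congrArg _ (funext hb)⟩

lemma permCast_mem {a b : ℕ} (h : a = b) (e : Equiv.Perm (Fin a))
    (he : e ∈ (P.π a).range) : permCast h e ∈ (P.π b).range := by
  subst h; rwa [permCast_refl]

end Lemmas
section Surj2
variable {G : ℕ → Type} [∀ n, Group (G n)] (P : GroupOperad G)

lemma surj_two (h : ∃ (N : ℕ) (g : G N), P.π N g ≠ 1) :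
    Function.Surjective (P.π 2) := by
  obtain ⟨N, g, hg⟩ := h
  set σ := P.π N g with hσdef
  -- find minimal non-fixed point x
  have hex : ∃ x, σ x ≠ x := by
    by_contra hall
    push_neg at hall
    exact hg (Equiv.ext hall)
  set s : Finset (Fin N) := Finset.univ.filter (fun x => σ x ≠ x) with hs
  have hsne : s.Nonempty := by
    obtain ⟨x, hx⟩ := hex
    exact ⟨x, by simp [hs, hx]⟩
  set x := s.min' hsne with hxdef
  have hx : σ x ≠ x := by
    have := s.min'_mem hsne
    simp [hs] at this
    exact this
  have hfix : ∀ y, y < x → σ y = y := by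
    intro y hy
    by_contra hyne
    exact absurd (s.min'_le y (by simp [hs, hyne])) (not_le.mpr hy)
  have hlt : x < σ x := by
    rcases lt_trichotomy (σ x) x with h | h | h
    · exact absurd (σ.injective (hfix _ h)) hx
    · exact absurd h hx
    · exact h
  set b := σ.symm x with hbdef
  have hσb : σ b = x := σ.apply_symm_apply x
  have hxb : x < b := by
    rcases lt_trichotomy b x with h | h | h
    · exact absurd ((hfix b h).symm.trans hσb) h.ne
    · exact absurd (h ▸ hσb) hx
    · exact h
  -- block sizes supported on x and b
  set m : Fin N → ℕ := fun j => (if j = x then 1 else 0) + (if j = b then 1 else 0) with hm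
  have hmx : m x = 1 := by simp [hm, hxb.ne]
  have hmb : m b = 1 := by simp [hm, hxb.ne']
  have hsum : ∑ j, m j = 2 := by
    rw [hm, Finset.sum_add_distrib]
    simp [Finset.sum_ite_eq']
  have hτone : (fun i => P.π (m i) (1 : G (m i))) = fun i => 1 := funext fun i => map_one _
  have hπγ : P.π (∑ i, m i) (P.γ g (fun i => (1 : G (m i))))
      = blockComp σ (fun i => (1 : Equiv.Perm (Fin (m i)))) := by
    rw [P.π_γ, ← hσdef]
    exact congrArg _ hτone
  -- the resulting permutation of Fin (∑ m) is nontrivial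
  have hne : P.π (∑ i, m i) (P.γ g (fun i => (1 : G (m i)))) ≠ 1 := by
    rw [hπγ]
    intro hone
    set z : Fin (m x) := ⟨0, by rw [hmx]; norm_num⟩ with hz
    set X := finSigmaEquiv N m ⟨x, z⟩ with hX
    have hXval : (X : ℕ) = 0 := by
      rw [hX, finSigmaEquiv_val]
      have : ∀ j : Fin (x:ℕ), m (Fin.castLE x.isLt.le j) = 0 := by
        intro j
        have h1 : Fin.castLE x.isLt.le j ≠ x := by
          intro hc
          have := congrArg Fin.val hc
          simp at this
          omega
        have h2 : Fin.castLE x.isLt.le j ≠ b := by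
          intro hc
          have := congrArg Fin.val hc
          have hxbv : (x:ℕ) < (b:ℕ) := hxb
          simp at this
          omega
        simp [hm, h1, h2]
      rw [Finset.sum_eq_zero (fun j _ => this j)]
      simp [hz]
    have hBval : 1 ≤ ((blockComp σ (fun i => (1 : Equiv.Perm (Fin (m i)))) X : Fin _) : ℕ) := by
      rw [hX, blockComp_val]
      have hmem : (⟨(x : ℕ), by exact_mod_cast hlt⟩ : Fin ((σ x : Fin N) : ℕ)) ∈ Finset.univ :=
        Finset.mem_univ _
      calc (1:ℕ) = m (σ.symm (Fin.castLE (σ x).isLt.le ⟨(x : ℕ), by exact_mod_cast hlt⟩)) := by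
                have : Fin.castLE (σ x).isLt.le ⟨(x : ℕ), by exact_mod_cast hlt⟩ = x :=
                  Fin.ext (by simp)
                rw [this, ← hbdef, hmb]
        _ ≤ ∑ j : Fin ((σ x : Fin N) : ℕ), m (σ.symm (Fin.castLE (σ x).isLt.le j)) :=
                Finset.single_le_sum (f := fun j => m (σ.symm (Fin.castLE (σ x).isLt.le j)))
                  (fun j _ => Nat.zero_le _) hmem
        _ ≤ _ := Nat.le_add_right _ _
    rw [hone] at hBval
    simp only [Equiv.Perm.coe_one, id] at hBval
    omega
  -- transport to level 2
  have h2 : ∃ h : G 2, P.π 2 h ≠ 1 := hsum ▸ ⟨P.γ g (fun i => (1 : G (m i))), hne⟩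
  obtain ⟨h2g, h2ne⟩ := h2
  intro τ
  by_cases hτ : τ = 1
  · exact ⟨1, by rw [map_one, hτ]⟩
  · exact ⟨h2g, by
      have key : ∀ a b : Equiv.Perm (Fin 2), a ≠ 1 → b ≠ 1 → a = b := by decide
      exact key _ _ h2ne hτ⟩
end Surj2
section Adj
variable {G : ℕ → Type} [∀ n, Group (G n)] (P : GroupOperad G)

lemma fin2_swap_val : ∀ w : Fin 2, ((Equiv.swap (0 : Fin 2) 1 w : Fin 2) : ℕ) = 1 - (w : ℕ) := by
  decide

lemma swap_adj_mem (hs2 : Function.Surjective (P.π 2)) {n : ℕ} (i : ℕ) (h : i + 1 < n) :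
    Equiv.swap (⟨i, by omega⟩ : Fin n) ⟨i + 1, h⟩ ∈ (P.π n).range := by
  obtain ⟨k, rfl⟩ : ∃ k, n = k + 1 := ⟨n - 1, by omega⟩
  have hik : i < k := by omega
  set m : Fin k → ℕ := fun j => if (j : ℕ) = i then 2 else 1 with hm
  have hsum : ∑ j, m j = k + 1 := by
    have hcongr : ∀ t : Fin k, m t = 1 + if (t : ℕ) = i then 1 else 0 := by
      intro t; by_cases ht : (t : ℕ) = i <;> simp [hm, ht]
    rw [Finset.sum_congr rfl (fun t _ => hcongr t), Finset.sum_add_distrib]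
    simp only [Finset.sum_const, Finset.card_univ, Fintype.card_fin, smul_eq_mul, mul_one]
    rw [Fin.sum_univ_eq_sum_range (fun t => if t = i then 1 else 0) k,
      Finset.sum_ite_eq' (Finset.range k) i (fun _ => 1)]
    simp [Finset.mem_range, hik]
  have hS : ∀ (J : ℕ) (hJ : J ≤ k), ∑ t : Fin J, m (Fin.castLE hJ t)
      = if J ≤ i then J else J + 1 := by
    intro J hJ
    have hcongr : ∀ t : Fin J, m (Fin.castLE hJ t) = 1 + if (t : ℕ) = i then 1 else 0 := by
      intro t; by_cases ht : (t : ℕ) = i <;> simp [hm, ht]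
    rw [Finset.sum_congr rfl (fun t _ => hcongr t), Finset.sum_add_distrib]
    simp only [Finset.sum_const, Finset.card_univ, Fintype.card_fin, smul_eq_mul, mul_one]
    rw [Fin.sum_univ_eq_sum_range (fun t => if t = i then 1 else 0) J,
      Finset.sum_ite_eq' (Finset.range J) i (fun _ => 1)]
    by_cases hJi : J ≤ i
    · rw [if_pos hJi]
      have hni : ¬ i ∈ Finset.range J := by simp [Finset.mem_range]; omega
      rw [if_neg hni]
      omega
    · rw [if_neg hJi]
      have hni : i ∈ Finset.range J := by simp [Finset.mem_range]; omega
      rw [if_pos hni]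
  set τ : (j : Fin k) → Equiv.Perm (Fin (m j)) := fun j =>
    if hj : (j : ℕ) = i then permCast (show 2 = m j by simp [hm, hj]) (Equiv.swap 0 1)
    else 1 with hτ
  have hτmem : ∀ j, τ j ∈ (P.π (m j)).range := by
    intro j
    simp only [hτ]
    by_cases hj : (j : ℕ) = i
    · rw [dif_pos hj]
      obtain ⟨g2, hg2⟩ := hs2 (Equiv.swap 0 1)
      exact permCast_mem P _ _ ⟨g2, hg2⟩
    · rw [dif_neg hj]
      exact ⟨1, map_one _⟩
  have hB : blockComp 1 τ ∈ (P.π (∑ j, m j)).range :=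
    mem_blockComp P _ _ ⟨1, map_one _⟩ hτmem
  have key : permCast hsum (blockComp 1 τ) = Equiv.swap (⟨i, by omega⟩ : Fin (k+1)) ⟨i + 1, h⟩ := by
    apply Equiv.ext
    intro x
    obtain ⟨⟨j, z⟩, hjz⟩ : ∃ p, finSigmaEquiv k m p = finCongr hsum.symm x :=
      ⟨_, (finSigmaEquiv k m).apply_symm_apply _⟩
    have hLHS : ((permCast hsum (blockComp 1 τ) x : Fin (k+1)) : ℕ)
        = ∑ t : Fin (j : ℕ), m (Fin.castLE j.isLt.le t) + ((τ j z : Fin (m j)) : ℕ) := by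
      rw [permCast_val, ← hjz]
      exact blockComp_val 1 τ j z
    have hxv : (x : ℕ) = ∑ t : Fin (j : ℕ), m (Fin.castLE j.isLt.le t) + (z : ℕ) := by
      have h0 : ((finCongr hsum.symm x : Fin _) : ℕ) = (x : ℕ) := rfl
      rw [← h0, ← hjz, finSigmaEquiv_val]
    rw [hS j.1 j.isLt.le] at hLHS hxv
    apply Fin.ext
    by_cases hji : (j : ℕ) = i
    · have hmj : m j = 2 := by simp [hm, hji]
      have hτj : ((τ j z : Fin (m j)) : ℕ) = 1 - (z : ℕ) := by
        simp only [hτ]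
        rw [dif_pos hji, permCast_val, fin2_swap_val]
        rfl
      rw [hτj] at hLHS
      have hz2 : (z : ℕ) < 2 := by have := z.isLt; omega
      rcases (by omega : (z : ℕ) = 0 ∨ (z : ℕ) = 1) with hz | hz
      · have hxc : x = (⟨i, by omega⟩ : Fin (k+1)) := Fin.ext (by rw [hxv]; simp [hji, hz])
        have hR : ((Equiv.swap (⟨i, by omega⟩ : Fin (k+1)) ⟨i + 1, h⟩ x : Fin (k+1)) : ℕ)
            = i + 1 := by rw [hxc, Equiv.swap_apply_left]
        rw [hLHS, hR, hji, hz]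
        simp
      · have hxd : x = (⟨i + 1, h⟩ : Fin (k+1)) := Fin.ext (by rw [hxv]; simp [hji, hz])
        have hR : ((Equiv.swap (⟨i, by omega⟩ : Fin (k+1)) ⟨i + 1, h⟩ x : Fin (k+1)) : ℕ)
            = i := by rw [hxd, Equiv.swap_apply_right]
        rw [hLHS, hR, hji, hz]
        simp
    · have hmj : m j = 1 := by simp [hm, hji]
      have hz0 : (z : ℕ) = 0 := by have := z.isLt; omega
      have hτj : ((τ j z : Fin (m j)) : ℕ) = 0 := by
        simp only [hτ]
        rw [dif_neg hji]
        simpa using hz0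
      rw [hτj] at hLHS
      have hxne1 : x ≠ (⟨i, by omega⟩ : Fin (k+1)) := by
        intro hc
        have := congrArg Fin.val hc
        simp only at this
        rw [hxv] at this
        by_cases hji2 : (j : ℕ) ≤ i <;> simp [hji2] at this <;> omega
      have hxne2 : x ≠ (⟨i + 1, h⟩ : Fin (k+1)) := by
        intro hc
        have := congrArg Fin.val hc
        simp only at this
        rw [hxv] at this
        by_cases hji2 : (j : ℕ) ≤ i <;> simp [hji2] at this <;> omega
      rw [Equiv.swap_apply_of_ne_of_ne hxne1 hxne2, hLHS, hxv, hz0]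
  rw [← key]
  exact permCast_mem P hsum _ hB
end Adj
section Final
variable {G : ℕ → Type} [∀ n, Group (G n)] (P : GroupOperad G)

lemma swap_adj_mem' (hs2 : Function.Surjective (P.π 2)) {n : ℕ} (u v : Fin n)
    (hv : (v : ℕ) = (u : ℕ) + 1) : Equiv.swap u v ∈ (P.π n).range := by
  rcases u with ⟨uv, hup⟩
  rcases v with ⟨vv, hvp⟩
  have hv' : vv = uv + 1 := hv
  subst hv'
  exact swap_adj_mem P hs2 uv hvp

lemma swap_lt_mem (hs2 : Function.Surjective (P.π 2)) :
    ∀ (d : ℕ) {n : ℕ} (u v : Fin n), (v : ℕ) = (u : ℕ) + d + 1 →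
      Equiv.swap u v ∈ (P.π n).range := by
  intro d
  induction d with
  | zero =>
    intro n u v hv
    exact swap_adj_mem' P hs2 u v (by omega)
  | succ d IH =>
    intro n u v hv
    have hvn : (v : ℕ) < n := v.isLt
    set w : Fin n := ⟨(u : ℕ) + d + 1, by omega⟩ with hw
    have h1 : Equiv.swap u w ∈ (P.π n).range := IH u w rfl
    have h2 : Equiv.swap w v ∈ (P.π n).range := swap_adj_mem' P hs2 w v (by simp [hw]; omega)
    have huw : u ≠ w := by
      intro hc; have := congrArg Fin.val hc; simp [hw] at this; omega
    have huv : u ≠ v := by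
      intro hc; have := congrArg Fin.val hc; omega
    have hkey : Equiv.swap w v * Equiv.swap u w * Equiv.swap w v = Equiv.swap v u :=
      Equiv.swap_mul_swap_mul_swap huw huv
    rw [Equiv.swap_comm, ← hkey]
    exact mul_mem (mul_mem h2 h1) h2

end Final

/-- If `𝒢` is a crossed group operad (the structure morphism `π : 𝒢 → 𝒮` is not trivial on all
levels), then `π : G n → S n` is surjective for every `n`. -/
theorem groupOperad_crossed_pi_surjective (G : ℕ → Type) [∀ n, Group (G n)]
    (P : GroupOperad G) (hcrossed : ¬ ∀ (n : ℕ) (g : G n), P.π n g = 1) :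
    ∀ n : ℕ, Function.Surjective (P.π n) := by
  push_neg at hcrossed
  obtain ⟨N, g, hg⟩ := hcrossed
  have hs2 : Function.Surjective (P.π 2) := surj_two P ⟨N, g, hg⟩
  intro n
  rw [← MonoidHom.range_eq_top, eq_top_iff, ← Equiv.Perm.closure_isSwap, Subgroup.closure_le]
  rintro σ ⟨u, v, huv, rfl⟩
  rcases lt_or_gt_of_ne huv with hlt | hlt
  · have hlt' : (u : ℕ) < (v : ℕ) := hlt
    exact swap_lt_mem P hs2 ((v : ℕ) - (u : ℕ) - 1) u v (by omega)
  · have hlt' : (v : ℕ) < (u : ℕ) := hlt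
    rw [Equiv.swap_comm]
    exact swap_lt_mem P hs2 ((u : ℕ) - (v : ℕ) - 1) v u (by omega)
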